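/- Fix n ∈ ℕ. For orthogonal (n+1)×(n+1) real matrices R, S define the (2n+2)×(2n+2) block matrix K(R, S) := (1/2)·[[R+S, R−S], [R−S, R+S]]. Then: (i) K(R, S)ᵀ B K(R, S) = B; (ii) det K(R, S) = det R · det S, so K(R, S) has determinant 1 whenever det R = det S; (iii) K is a group homomorphism: K(R, S)·K(R', S') = K(R R', S S'); (iv) K(R, S) equals the block-diagonal matrix [[R, 0], [0, R]] if and only if R = S, so K restricted to the diagonal agrees with the embedding M ↦ [[M, 0], [0, (Mᵀ)⁻¹]] on O(n+1). -/
import Mathlib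


open Matrix

/-- The matrix `B = (1/2)·[[0, I], [I, 0]]` of the neutral bilinear form. -/
noncomputable def Bmat (n : ℕ) :
    Matrix (Fin (n + 1) ⊕ Fin (n + 1)) (Fin (n + 1) ⊕ Fin (n + 1)) ℝ :=
  (1 / 2 : ℝ) • Matrix.fromBlocks 0 1 1 0

/-- The block matrix `K(R, S) = (1/2)·[[R+S, R−S], [R−S, R+S]]`. -/
noncomputable def Kmat (n : ℕ) (R S : Matrix (Fin (n + 1)) (Fin (n + 1)) ℝ) :
    Matrix (Fin (n + 1) ⊕ Fin (n + 1)) (Fin (n + 1) ⊕ Fin (n + 1)) ℝ :=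
  (1 / 2 : ℝ) • Matrix.fromBlocks (R + S) (R - S) (R - S) (R + S)

private lemma det_fromBlocks_symm {m : Type*} [Fintype m] [DecidableEq m]
    (A B : Matrix m m ℝ) :
    (Matrix.fromBlocks A B B A).det = (A + B).det * (A - B).det := by
  have h : (Matrix.fromBlocks (1 : Matrix m m ℝ) 1 0 1) * Matrix.fromBlocks A B B A *
      Matrix.fromBlocks (1 : Matrix m m ℝ) (-1) 0 1 =
      Matrix.fromBlocks (A + B) 0 B (A - B) := by
    simp only [Matrix.fromBlocks_multiply]
    refine Matrix.fromBlocks_inj.mpr ⟨?_, ?_, ?_, ?_⟩ <;> noncomm_ring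
  have hd := congrArg Matrix.det h
  rw [Matrix.det_mul, Matrix.det_mul, Matrix.det_fromBlocks_zero₂₁,
    Matrix.det_fromBlocks_zero₂₁, Matrix.det_fromBlocks_zero₁₂] at hd
  simpa using hd

/-- For orthogonal `R, S`: (i) `K(R,S)ᵀ B K(R,S) = B`;
(ii) `det K(R,S) = det R · det S`, so the determinant is `1` when `det R = det S`;
(iii) `K` is a group homomorphism; (iv) `K(R,S)` is block diagonal `[[R,0],[0,R]]` iff
`R = S`, and on the diagonal `K` agrees with `M ↦ [[M,0],[0,(Mᵀ)⁻¹]]` on `O(n+1)`. -/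
theorem stmt_11 (n : ℕ) (R S : Matrix (Fin (n + 1)) (Fin (n + 1)) ℝ)
    (hR : Rᵀ * R = 1) (hS : Sᵀ * S = 1) :
    -- (i)
    (Kmat n R S)ᵀ * Bmat n * Kmat n R S = Bmat n ∧
    -- (ii)
    (Kmat n R S).det = R.det * S.det ∧
    (R.det = S.det → (Kmat n R S).det = 1) ∧
    -- (iii)
    (∀ R' S' : Matrix (Fin (n + 1)) (Fin (n + 1)) ℝ, R'ᵀ * R' = 1 → S'ᵀ * S' = 1 →
      Kmat n R S * Kmat n R' S' = Kmat n (R * R') (S * S')) ∧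
    -- (iv)
    ((Kmat n R S = Matrix.fromBlocks R 0 0 R) ↔ R = S) ∧
    Kmat n R R = Matrix.fromBlocks R 0 0 (Rᵀ)⁻¹ := by
  have hdet : (Kmat n R S).det = R.det * S.det := by
    have h : Kmat n R S =
        Matrix.fromBlocks ((1/2 : ℝ) • (R + S)) ((1/2 : ℝ) • (R - S))
          ((1/2 : ℝ) • (R - S)) ((1/2 : ℝ) • (R + S)) := by
      rw [Kmat, Matrix.fromBlocks_smul]
    rw [h, det_fromBlocks_symm]
    congr 1 <;> · congr 1; ext i j; simp [Matrix.add_apply, Matrix.sub_apply]; ring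
  refine ⟨?_, hdet, ?_, ?_, ?_, ?_⟩
  · rw [Kmat, Bmat]
    simp only [Matrix.transpose_smul, Matrix.fromBlocks_transpose, Matrix.smul_mul,
      Matrix.mul_smul, Matrix.fromBlocks_multiply, smul_smul, Matrix.transpose_add,
      Matrix.transpose_sub, Matrix.mul_zero, Matrix.mul_one, zero_add, add_zero]
    have e1 : (Rᵀ - Sᵀ) * (R + S) + (Rᵀ + Sᵀ) * (R - S) = 0 := by
      have h : (Rᵀ - Sᵀ) * (R + S) + (Rᵀ + Sᵀ) * (R - S)
          = (Rᵀ * R + Rᵀ * R) - (Sᵀ * S + Sᵀ * S) := by noncomm_ring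
      rw [h, hR, hS, sub_self]
    have e2 : (Rᵀ - Sᵀ) * (R - S) + (Rᵀ + Sᵀ) * (R + S)
        = (1 : Matrix (Fin (n+1)) (Fin (n+1)) ℝ) + 1 + (1 + 1) := by
      have h : (Rᵀ - Sᵀ) * (R - S) + (Rᵀ + Sᵀ) * (R + S)
          = (Rᵀ * R + Rᵀ * R) + (Sᵀ * S + Sᵀ * S) := by noncomm_ring
      rw [h, hR, hS]
    have e3 : (Rᵀ + Sᵀ) * (R + S) + (Rᵀ - Sᵀ) * (R - S)
        = (1 : Matrix (Fin (n+1)) (Fin (n+1)) ℝ) + 1 + (1 + 1) := by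
      have h : (Rᵀ + Sᵀ) * (R + S) + (Rᵀ - Sᵀ) * (R - S)
          = (Rᵀ * R + Rᵀ * R) + (Sᵀ * S + Sᵀ * S) := by noncomm_ring
      rw [h, hR, hS]
    have e4 : (Rᵀ + Sᵀ) * (R - S) + (Rᵀ - Sᵀ) * (R + S) = 0 := by
      have h : (Rᵀ + Sᵀ) * (R - S) + (Rᵀ - Sᵀ) * (R + S)
          = (Rᵀ * R + Rᵀ * R) - (Sᵀ * S + Sᵀ * S) := by noncomm_ring
      rw [h, hR, hS, sub_self]
    rw [e1, e2, e3, e4]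
    ext i j
    rcases i with i | i <;> rcases j with j | j <;>
      simp [Matrix.fromBlocks, Matrix.smul_apply, Matrix.add_apply, Matrix.one_apply] <;>
        split <;> norm_num
  · intro h
    rw [hdet, h]
    have := congrArg Matrix.det hS
    simpa [Matrix.det_mul, Matrix.det_transpose] using this
  · intro R' S' _ _
    rw [Kmat, Kmat, Kmat, Matrix.smul_mul, Matrix.mul_smul, smul_smul,
      Matrix.fromBlocks_multiply]
    have p1 : (R + S) * (R' + S') + (R - S) * (R' - S')
        = (R * R' + S * S') + (R * R' + S * S') := by noncomm_ring
    have p2 : (R + S) * (R' - S') + (R - S) * (R' + S')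
        = (R * R' - S * S') + (R * R' - S * S') := by noncomm_ring
    have p3 : (R - S) * (R' + S') + (R + S) * (R' - S')
        = (R * R' - S * S') + (R * R' - S * S') := by noncomm_ring
    have p4 : (R - S) * (R' - S') + (R + S) * (R' + S')
        = (R * R' + S * S') + (R * R' + S * S') := by noncomm_ring
    rw [p1, p2, p3, p4]
    ext i j
    rcases i with i | i <;> rcases j with j | j <;>
      · simp [Matrix.fromBlocks, Matrix.smul_apply, Matrix.add_apply, Matrix.sub_apply]
        ring
  · constructor
    · intro h
      rw [Kmat, Matrix.fromBlocks_smul] at h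
      have h2 := (Matrix.fromBlocks_inj.mp h).2.1
      have h3 : R - S = 0 := by
        have := congrArg (fun M => (2 : ℝ) • M) h2
        simpa [smul_smul] using this
      linear_combination (norm := abel) h3
    · intro h
      subst h
      rw [Kmat]
      ext i j
      rcases i with i | i <;> rcases j with j | j <;>
        · simp [Matrix.fromBlocks, Matrix.smul_apply, Matrix.add_apply, Matrix.sub_apply]
          try ring
  · have hinv : (Rᵀ)⁻¹ = R := Matrix.inv_eq_right_inv hR
    rw [hinv, Kmat]
    ext i j
    rcases i with i | i <;> rcases j with j | j <;>
      · simp [Matrix.fromBlocks, Matrix.smul_apply, Matrix.add_apply, Matrix.sub_apply]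
        try ring
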